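/- Let X, Y be Hilbert spaces, A, A_η : X → Y bounded with ‖A − A_η‖ ≤ η, α > 0, y ∈ Y, y_δ ∈ Y with ‖y_δ − y‖ ≤ δ, and let x† ∈ X satisfy A x† = y. Define x_{α,δ,η} = (A_η*A_η + αI)⁻¹ A_η* y_δ. Then ‖x_{α,δ,η} − x†‖ ≤ ‖(A_η*A_η + αI)⁻¹ A_η*(y_δ − y)‖ + (η/(2√α))‖x†‖ + α‖(A_η*A_η + αI)⁻¹ x†‖. -/

import Mathlib

open ContinuousLinearMap Filter RealInnerProductSpace

variable {X Y : Type*} [NormedAddCommGroup X] [InnerProductSpace ℝ X] [CompleteSpace X]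
  [NormedAddCommGroup Y] [InnerProductSpace ℝ Y] [CompleteSpace Y]

lemma aux_inner (Aη : X →L[ℝ] Y) (α : ℝ) (x : X) :
    ⟪(adjoint Aη ∘L Aη + α • (1 : X →L[ℝ] X)) x, x⟫ = ‖Aη x‖ ^ 2 + α * ‖x‖ ^ 2 := by
  simp only [add_apply, comp_apply, smul_apply, one_apply_eq_self, inner_add_left,
    inner_smul_left, RCLike.star_def, starRingEnd_apply, star_trivial]
  rw [adjoint_inner_left, real_inner_self_eq_norm_sq, real_inner_self_eq_norm_sq]

lemma aux_isUnit (Aη : X →L[ℝ] Y) (α : ℝ) (hα : 0 < α) :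
    IsUnit (adjoint Aη ∘L Aη + α • (1 : X →L[ℝ] X)) := by
  apply isUnit_of_forall_le_norm_inner_map _ (c := α.toNNReal)
    (by simpa using hα)
  intro x
  rw [aux_inner]
  have h1 : (0:ℝ) ≤ ‖Aη x‖ ^ 2 := sq_nonneg _
  have h2 : (0:ℝ) ≤ α * ‖x‖ ^ 2 := by positivity
  rw [Real.norm_eq_abs, abs_of_nonneg (by linarith), Real.coe_toNNReal _ hα.le]
  nlinarith

lemma aux_bound (Aη : X →L[ℝ] Y) (α : ℝ) (hα : 0 < α) (z : Y) :
    ‖(Ring.inverse (adjoint Aη ∘L Aη + α • (1 : X →L[ℝ] X))) (adjoint Aη z)‖ ≤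
      ‖z‖ / (2 * Real.sqrt α) := by
  set T : X →L[ℝ] X := adjoint Aη ∘L Aη + α • (1 : X →L[ℝ] X) with hTdef
  set u : X := (Ring.inverse T) (adjoint Aη z) with hu
  have hUnit : IsUnit T := aux_isUnit Aη α hα
  have hTu : T u = adjoint Aη z := by
    have := Ring.mul_inverse_cancel T hUnit
    calc T u = (T * Ring.inverse T) (adjoint Aη z) := rfl
    _ = adjoint Aη z := by rw [this]; rfl
  have key : ‖Aη u‖ ^ 2 + α * ‖u‖ ^ 2 ≤ ‖z‖ * ‖Aη u‖ := by
    have h1 : ⟪T u, u⟫ = ‖Aη u‖ ^ 2 + α * ‖u‖ ^ 2 := aux_inner Aη α u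
    have h2 : ⟪T u, u⟫ = ⟪z, Aη u⟫ := by
      rw [hTu, adjoint_inner_left]
    have h3 : ⟪z, Aη u⟫ ≤ ‖z‖ * ‖Aη u‖ := real_inner_le_norm _ _
    linarith [h1 ▸ h2 ▸ h3]
  have hs : Real.sqrt α > 0 := Real.sqrt_pos.mpr hα
  have hsq : Real.sqrt α ^ 2 = α := Real.sq_sqrt hα.le
  by_cases h0 : Aη u = 0
  · have : α * ‖u‖ ^ 2 ≤ 0 := by simpa [h0] using key
    have hu2 : ‖u‖ ^ 2 = 0 := le_antisymm (by nlinarith) (sq_nonneg _)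
    have hu0 : ‖u‖ = 0 := by
      have := pow_eq_zero_iff (n := 2) (by norm_num) |>.mp hu2
      simpa using this
    rw [hu0]
    positivity
  · have hAu : 0 < ‖Aη u‖ := norm_pos_iff.mpr h0
    have amgm : 2 * Real.sqrt α * ‖u‖ * ‖Aη u‖ ≤ ‖Aη u‖ ^ 2 + α * ‖u‖ ^ 2 := by
      nlinarith [sq_nonneg (‖Aη u‖ - Real.sqrt α * ‖u‖)]
    have : 2 * Real.sqrt α * ‖u‖ * ‖Aη u‖ ≤ ‖z‖ * ‖Aη u‖ := le_trans amgm key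
    have h4 : 2 * Real.sqrt α * ‖u‖ ≤ ‖z‖ := by
      exact le_of_mul_le_mul_right this hAu
    rw [le_div_iff₀ (by positivity)]
    linarith

theorem stmt_14 (A Aη : X →L[ℝ] Y) (η : ℝ) (hη : ‖A - Aη‖ ≤ η) (α : ℝ) (hα : 0 < α)
    (y yδ : Y) (δ : ℝ) (hδ : ‖yδ - y‖ ≤ δ) (xdag : X) (hx : A xdag = y) :
    ‖(Ring.inverse (adjoint Aη ∘L Aη + α • (1 : X →L[ℝ] X))) (adjoint Aη yδ) - xdag‖ ≤
      ‖(Ring.inverse (adjoint Aη ∘L Aη + α • (1 : X →L[ℝ] X))) (adjoint Aη (yδ - y))‖ +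
        η / (2 * Real.sqrt α) * ‖xdag‖ +
        α * ‖(Ring.inverse (adjoint Aη ∘L Aη + α • (1 : X →L[ℝ] X))) xdag‖ := by
  set T : X →L[ℝ] X := adjoint Aη ∘L Aη + α • (1 : X →L[ℝ] X) with hTdef
  set R : X →L[ℝ] X := Ring.inverse T with hRdef
  have hUnit : IsUnit T := aux_isUnit Aη α hα
  have hRT : ∀ x : X, R (T x) = x := by
    intro x
    have h := Ring.inverse_mul_cancel T hUnit
    calc R (T x) = (Ring.inverse T * T) x := rfl
    _ = x := by rw [h]; rfl
  have hdecomp : R (adjoint Aη yδ) - xdag =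
      R (adjoint Aη (yδ - y)) + R (adjoint Aη ((A - Aη) xdag)) - α • R xdag := by
    have h1 : xdag = R (T xdag) := (hRT xdag).symm
    have h2 : adjoint Aη yδ = adjoint Aη (yδ - y) + adjoint Aη ((A - Aη) xdag)
        - α • xdag + T xdag := by
      simp only [hTdef, map_sub, sub_apply, hx, add_apply, comp_apply, smul_apply, one_apply_eq_self,
        map_sub]
      abel
    rw [h2]
    simp only [map_add, map_sub, map_smul, hRT]
    abel
  rw [hdecomp]
  have htri : ‖R (adjoint Aη (yδ - y)) + R (adjoint Aη ((A - Aη) xdag)) - α • R xdag‖ ≤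
      ‖R (adjoint Aη (yδ - y))‖ + ‖R (adjoint Aη ((A - Aη) xdag))‖ + ‖α • R xdag‖ :=
    (norm_sub_le _ _).trans (by have := norm_add_le (R (adjoint Aη (yδ - y))) (R (adjoint Aη ((A - Aη) xdag))); linarith)
  have hmid : ‖R (adjoint Aη ((A - Aη) xdag))‖ ≤ η / (2 * Real.sqrt α) * ‖xdag‖ := by
    have hb := aux_bound Aη α hα ((A - Aη) xdag)
    have hAx : ‖(A - Aη) xdag‖ ≤ η * ‖xdag‖ :=
      ((A - Aη).le_opNorm xdag).trans (mul_le_mul_of_nonneg_right hη (norm_nonneg _))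
    refine hb.trans ?_
    rw [div_mul_eq_mul_div, div_le_div_iff_of_pos_right (by positivity)]
    exact hAx
  have hsm : ‖α • R xdag‖ = α * ‖R xdag‖ := by
    rw [norm_smul, Real.norm_eq_abs, abs_of_pos hα]
  rw [hsm] at htri
  linarith
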